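/- For G ∈ 𝒢* representing a binary string x of length 2^k, the vertices of G are in bijection with a subset of the dyadic substring set S(x) via V ↦ φ_G(V); consequently the number of vertices of G is at most |S(x)| ≤ ∑_{i=0}^k min(2^{k−i}, 2^{2^i}), and hence at most 2^k(2+ε_k)/k for some sequence ε_k → 0 independent of G. -/

import Mathlib

/-- The class `𝒢` of level-labeled rooted DAGs used to represent data strings:
finitely many vertices, a root at level 1, exactly two terminal vertices `T0, T1` at a
common level `k+1`, every nonterminal vertex has out-edges labeled `0` and `1` ending at
distinct vertices, levels strictly increase along edges, and every vertex is reachable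
from the root.  (A vertex is terminal iff it equals `T0` or `T1`; `succ0, succ1` are
only meaningful on nonterminal vertices.) -/
structure BDD (V : Type) [Fintype V] [DecidableEq V] where
  k : ℕ
  root : V
  T0 : V
  T1 : V
  succ0 : V → V
  succ1 : V → V
  level : V → ℕ
  k_pos : 1 ≤ k
  T0_ne_T1 : T0 ≠ T1
  root_level : level root = 1
  T0_level : level T0 = k + 1
  T1_level : level T1 = k + 1
  level_le : ∀ v, level v ≤ k + 1
  succ_ne : ∀ v, v ≠ T0 → v ≠ T1 → succ0 v ≠ succ1 v
  level_lt_succ0 : ∀ v, v ≠ T0 → v ≠ T1 → level v < level (succ0 v)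
  level_lt_succ1 : ∀ v, v ≠ T0 → v ≠ T1 → level v < level (succ1 v)
  reachable : ∀ v, Relation.ReflTransGen
    (fun a b => a ≠ T0 ∧ a ≠ T1 ∧ (b = succ0 a ∨ b = succ1 a)) root v

/-- `φ` is the canonical string map of `G`: `φ(T0) = 0`, `φ(T1) = 1`, and for a
nonterminal vertex `V` with `0`- and `1`-successors `V₀, V₁`,
`φ(V) = φ(V₀)^{2^{L(V₀)−L(V)−1}} φ(V₁)^{2^{L(V₁)−L(V)−1}}`
(the defining recursion of the canonical map; it determines `φ` uniquely). -/
def IsPhi {V : Type} [Fintype V] [DecidableEq V] (G : BDD V) (φ : V → List Bool) : Prop :=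
  φ G.T0 = [false] ∧ φ G.T1 = [true] ∧
  ∀ v, v ≠ G.T0 → v ≠ G.T1 →
    φ v = (List.replicate (2 ^ (G.level (G.succ0 v) - G.level v - 1)) (φ (G.succ0 v))).flatten
        ++ (List.replicate (2 ^ (G.level (G.succ1 v) - G.level v - 1)) (φ (G.succ1 v))).flatten

/-- The dyadic substring set `S(x)` of a binary string `x` of length `2^k`. -/
def dyadicSet (k : ℕ) (x : List Bool) : Finset (List Bool) :=
  (Finset.range (k + 1)).biUnion fun i =>
    (Finset.range (2 ^ (k - i))).image fun j => (x.drop (j * 2 ^ i)).take (2 ^ i)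

/-- For `G ∈ 𝒢*` representing a binary string `x` of length `2^k`, the map
`V ↦ φ_G(V)` injects the vertex set of `G` into the dyadic substring set `S(x)`;
consequently `|V(G)| ≤ |S(x)| ≤ ∑_{i=0}^k min(2^{k−i}, 2^{2^i})`, and hence
`|V(G)| ≤ 2^k(2+ε_k)/k` for some sequence `ε_k → 0` independent of `G`. -/
lemma flatten_replicate_length {α} (n : ℕ) (l : List α) :
    (List.replicate n l).flatten.length = n * l.length := by
  induction n with
  | zero => simp
  | succ n ih => simp [List.replicate_succ, ih, Nat.succ_mul, Nat.add_comm]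

lemma flatten_replicate_succ {α} (n : ℕ) (l : List α) :
    (List.replicate (n+1) l).flatten = l ++ (List.replicate n l).flatten := by
  simp [List.replicate_succ]

variable {V : Type} [Fintype V] [DecidableEq V] (G : BDD V) (φ : V → List Bool)

lemma level_pos (v : V) : 1 ≤ G.level v := by
  have h := G.reachable v
  induction h with
  | refl => rw [G.root_level]
  | tail h e ih =>
    rcases e with ⟨h0, h1, h2 | h2⟩
    · subst h2; exact le_of_lt (lt_of_le_of_lt ih (G.level_lt_succ0 _ h0 h1))
    · subst h2; exact le_of_lt (lt_of_le_of_lt ih (G.level_lt_succ1 _ h0 h1))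

lemma phi_length (hφ : IsPhi G φ) :
    ∀ v, (φ v).length = 2 ^ (G.k + 1 - G.level v) := by
  obtain ⟨h0, h1, hrec⟩ := hφ
  have key : ∀ m v, G.k + 1 - G.level v ≤ m → (φ v).length = 2 ^ (G.k + 1 - G.level v) := by
    intro m
    induction m with
    | zero =>
      intro v hv
      by_cases e0 : v = G.T0
      · subst e0; rw [h0, G.T0_level]; simp
      by_cases e1 : v = G.T1
      · subst e1; rw [h1, G.T1_level]; simp
      · exfalso
        have := G.level_lt_succ0 v e0 e1
        have := G.level_le (G.succ0 v)
        omega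
    | succ m ih =>
      intro v hv
      by_cases e0 : v = G.T0
      · subst e0; rw [h0, G.T0_level]; simp
      by_cases e1 : v = G.T1
      · subst e1; rw [h1, G.T1_level]; simp
      · have hl0 := G.level_lt_succ0 v e0 e1
        have hl1 := G.level_lt_succ1 v e0 e1
        have hle0 := G.level_le (G.succ0 v)
        have hle1 := G.level_le (G.succ1 v)
        have m0 : G.k + 1 - G.level (G.succ0 v) ≤ m := by omega
        have m1 : G.k + 1 - G.level (G.succ1 v) ≤ m := by omega
        rw [hrec v e0 e1]
        simp only [List.length_append, flatten_replicate_length, ih _ m0, ih _ m1]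
        rw [← pow_add, ← pow_add]
        have hv' : 1 ≤ G.level v := level_pos G v
        have e : G.level (G.succ0 v) - G.level v - 1 + (G.k + 1 - G.level (G.succ0 v))
            = G.k - G.level v := by omega
        have e' : G.level (G.succ1 v) - G.level v - 1 + (G.k + 1 - G.level (G.succ1 v))
            = G.k - G.level v := by omega
        rw [e, e', ← two_mul, ← pow_succ']
        congr 1
        omega
  exact fun v => key _ v le_rfl

lemma occ_split {x a b : List Bool} {p : ℕ}
    (heq : a ++ b = (x.drop p).take (a ++ b).length) :
    (a = (x.drop p).take a.length ∧
     b = (x.drop (p + a.length)).take b.length) := by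
  have hdp : x.drop p = (a ++ b) ++ x.drop (p + (a++b).length) := by
    conv_lhs => rw [← List.take_append_drop ((a++b).length) (x.drop p)]
    rw [← heq, List.drop_drop]
  constructor
  · rw [hdp, List.append_assoc, List.take_left]
  · have h2 : x.drop (p + a.length) = b ++ x.drop (p + (a++b).length) := by
      rw [← List.drop_drop, hdp, List.append_assoc, List.drop_left]
    rw [h2, List.take_left]

lemma phi_occ (hφ : IsPhi G φ) (v : V) :
    ∃ p, 2 ^ (G.k + 1 - G.level v) ∣ p ∧ p + (φ v).length ≤ 2 ^ G.k ∧
      φ v = (((φ G.root).drop p).take (φ v).length) := by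
  have hlen := phi_length G φ hφ
  have hxlen : (φ G.root).length = 2 ^ G.k := by
    rw [hlen, G.root_level]; norm_num
  obtain ⟨h0, h1, hrec⟩ := hφ
  have h := G.reachable v
  induction h with
  | refl =>
    refine ⟨0, dvd_zero _, ?_, ?_⟩
    · rw [hxlen]; omega
    · rw [List.drop_zero, List.take_length]
  | tail hr e ih =>
    rename_i b v'
    obtain ⟨p, hdvd, hple, heq⟩ := ih
    rcases e with ⟨e0, e1, h2⟩
    have hl0 := G.level_lt_succ0 b e0 e1
    have hl1 := G.level_lt_succ1 b e0 e1
    have hle0 := G.level_le (G.succ0 b)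
    have hle1 := G.level_le (G.succ1 b)
    have hlb := level_pos G b
    -- φ b = A ++ B
    set A := (List.replicate (2 ^ (G.level (G.succ0 b) - G.level b - 1)) (φ (G.succ0 b))).flatten with hA
    set B := (List.replicate (2 ^ (G.level (G.succ1 b) - G.level b - 1)) (φ (G.succ1 b))).flatten with hB
    have hfb : φ b = A ++ B := hrec b e0 e1
    have heq' : A ++ B = ((φ G.root).drop p).take (A ++ B).length := by
      rw [← hfb]; exact heq
    have hsplit := occ_split heq'
    have hAlen : A.length = 2 ^ (G.k - G.level b) := by
      rw [hA, flatten_replicate_length, hlen, ← pow_add]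
      congr 1; omega
    rcases h2 with h2 | h2
    · -- v' = succ0 b : prefix of A
      subst h2
      refine ⟨p, ?_, ?_, ?_⟩
      · exact dvd_trans (pow_dvd_pow 2 (by omega)) hdvd
      · have : (φ (G.succ0 b)).length ≤ (φ b).length := by
          rw [hlen, hlen]; exact Nat.pow_le_pow_right (by norm_num) (by omega)
        omega
      · -- A = φ(succ0 b) ++ rest
        have hm : 2 ^ (G.level (G.succ0 b) - G.level b - 1)
            = (2 ^ (G.level (G.succ0 b) - G.level b - 1) - 1) + 1 := by
          have : 0 < 2 ^ (G.level (G.succ0 b) - G.level b - 1) := Nat.pow_pos (by norm_num)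
          omega
        have hA' : A = φ (G.succ0 b) ++
            (List.replicate (2 ^ (G.level (G.succ0 b) - G.level b - 1) - 1) (φ (G.succ0 b))).flatten := by
          rw [hA, hm, flatten_replicate_succ]; simp
        have := (occ_split (x := φ G.root) (p := p) (by rw [← hA']; exact hsplit.1)).1
        exact this
    · -- v' = succ1 b : prefix of B at position p + A.length
      subst h2
      refine ⟨p + A.length, ?_, ?_, ?_⟩
      · apply dvd_add
        · exact dvd_trans (pow_dvd_pow 2 (by omega)) hdvd
        · rw [hAlen]; exact pow_dvd_pow 2 (by omega)
      · have hBl : (φ (G.succ1 b)).length ≤ B.length := by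
          rw [hB, flatten_replicate_length, hlen]
          nlinarith [Nat.pow_pos (n := G.level (G.succ1 b) - G.level b - 1) (show 0 < 2 by norm_num),
            Nat.pow_pos (n := G.k + 1 - G.level (G.succ1 b)) (show 0 < 2 by norm_num)]
        have : (φ b).length = A.length + B.length := by rw [hfb]; simp
        omega
      · have hm : 2 ^ (G.level (G.succ1 b) - G.level b - 1)
            = (2 ^ (G.level (G.succ1 b) - G.level b - 1) - 1) + 1 := by
          have : 0 < 2 ^ (G.level (G.succ1 b) - G.level b - 1) := Nat.pow_pos (by norm_num)
          omega
        have hB' : B = φ (G.succ1 b) ++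
            (List.replicate (2 ^ (G.level (G.succ1 b) - G.level b - 1) - 1) (φ (G.succ1 b))).flatten := by
          rw [hB, hm, flatten_replicate_succ]; simp
        have := (occ_split (x := φ G.root) (p := p + A.length) (by rw [← hB']; exact hsplit.2)).1
        exact this

lemma phi_mem (hφ : IsPhi G φ) (v : V) : φ v ∈ dyadicSet G.k (φ G.root) := by
  obtain ⟨p, hdvd, hple, heq⟩ := phi_occ G φ hφ v
  have hlen := phi_length G φ hφ v
  have hlv := level_pos G v
  have hlvle := G.level_le v
  set i := G.k + 1 - G.level v with hi
  have hik : i ≤ G.k := by omega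
  obtain ⟨j, hj⟩ := hdvd
  rw [dyadicSet, Finset.mem_biUnion]
  refine ⟨i, Finset.mem_range.2 (by omega), ?_⟩
  rw [Finset.mem_image]
  refine ⟨j, Finset.mem_range.2 ?_, ?_⟩
  · have h1 : j * 2 ^ i + 2 ^ i ≤ 2 ^ G.k := by rw [mul_comm, ← hj]; rw [hlen] at hple; exact hple
    have h2 : (j + 1) * 2 ^ i ≤ 2 ^ (G.k - i) * 2 ^ i := by
      rw [← pow_add]
      have : G.k - i + i = G.k := by omega
      rw [this, add_mul, one_mul]; exact h1
    have hpos : 0 < 2 ^ i := Nat.pow_pos (by norm_num)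
    have := Nat.le_of_mul_le_mul_right h2 hpos
    omega
  · rw [hlen, hj, mul_comm] at heq
    exact heq.symm

lemma dyadic_card_le (k : ℕ) (x : List Bool) (hx : x.length = 2 ^ k) :
    (dyadicSet k x).card ≤ ∑ i ∈ Finset.range (k+1), min (2^(k-i)) (2^(2^i)) := by
  rw [dyadicSet]
  refine le_trans (Finset.card_biUnion_le) (Finset.sum_le_sum ?_)
  intro i hi
  rw [Finset.mem_range] at hi
  apply le_min
  · exact le_trans (Finset.card_image_le) (by simp)
  · have hlen : ∀ l ∈ (Finset.range (2 ^ (k - i))).image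
        (fun j => (x.drop (j * 2 ^ i)).take (2 ^ i)), l.length = 2 ^ i := by
      intro l hl
      rw [Finset.mem_image] at hl
      obtain ⟨j, hj, rfl⟩ := hl
      rw [Finset.mem_range] at hj
      rw [List.length_take, List.length_drop, hx]
      have h1 : (j+1) * 2^i ≤ 2^(k-i) * 2^i := Nat.mul_le_mul_right _ hj
      rw [← pow_add] at h1
      have h2 : k - i + i = k := by omega
      rw [h2, add_mul, one_mul] at h1
      omega
    classical
    calc ((Finset.range (2 ^ (k - i))).image fun j => (x.drop (j * 2 ^ i)).take (2 ^ i)).card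
        ≤ (Finset.univ : Finset (Fin (2^i) → Bool)).card := by
          refine Finset.card_le_card_of_injOn (fun l => fun t : Fin (2^i) => l.getD t false)
            (fun _ _ => Finset.mem_univ _) ?_
          intro l1 h1 l2 h2 hf
          apply List.ext_getElem (by rw [hlen l1 h1, hlen l2 h2])
          intro n hn1 hn2
          have := congrFun hf ⟨n, by rw [← hlen l1 h1]; exact hn1⟩
          simpa [List.getD_eq_getElem, hn1, hn2] using this
      _ = 2^(2^i) := by simp

open Finset

def Ssum (k : ℕ) : ℕ := ∑ i ∈ range (k + 1), min (2 ^ (k - i)) (2 ^ (2 ^ i))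

lemma geom2 (n : ℕ) : ∑ i ∈ range n, 2 ^ i = 2 ^ n - 1 := by
  induction n with
  | zero => simp
  | succ n ih =>
    rw [Finset.sum_range_succ, ih, pow_succ]
    have : 0 < 2 ^ n := Nat.pow_pos (by norm_num)
    omega

lemma doubling (M : ℕ) : ∑ i ∈ range M, 2 ^ 2 ^ i ≤ 2 ^ (2 ^ (M - 1) + 1) := by
  induction M with
  | zero => simp
  | succ M ih =>
    rcases Nat.eq_zero_or_pos M with rfl | hM
    · simp
    rw [Finset.sum_range_succ]
    have h1 : 2 ^ (M - 1) + 1 ≤ 2 ^ M := by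
      have : 2 ^ M = 2 * 2 ^ (M - 1) := by
        rw [← pow_succ']
        congr 1
        omega
      have h2 : 1 ≤ 2 ^ (M-1) := Nat.one_le_two_pow
      omega
    calc ∑ i ∈ range M, 2 ^ 2 ^ i + 2 ^ 2 ^ M
        ≤ 2 ^ (2 ^ (M - 1) + 1) + 2 ^ 2 ^ M := by omega
      _ ≤ 2 ^ 2 ^ M + 2 ^ 2 ^ M := by
          have := Nat.pow_le_pow_right (show 1 ≤ 2 by norm_num) h1
          omega
      _ = 2 ^ (2 ^ M + 1) := by rw [pow_succ]; ring
      _ = 2 ^ (2 ^ (M + 1 - 1) + 1) := by norm_num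

lemma tail_sum (a b : ℕ) : ∑ i ∈ Finset.Ico (a + 1) (b + 1), 2 ^ (b - i) ≤ 2 ^ (b - a) := by
  rw [Finset.sum_Ico_eq_sum_range]
  have h1 : ∀ j, b - (a + 1 + j) = (b + 1 - (a + 1)) - 1 - j := by intro j; omega
  calc ∑ j ∈ range (b + 1 - (a + 1)), 2 ^ (b - (a + 1 + j))
      = ∑ j ∈ range (b + 1 - (a + 1)), 2 ^ ((b + 1 - (a + 1)) - 1 - j) := by
        exact Finset.sum_congr rfl fun j _ => by rw [h1]
    _ = ∑ j ∈ range (b + 1 - (a + 1)), 2 ^ j := Finset.sum_range_reflect (fun j => 2 ^ j) _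
    _ = 2 ^ (b + 1 - (a + 1)) - 1 := geom2 _
    _ ≤ 2 ^ (b - a) := by
        have : b + 1 - (a + 1) ≤ b - a := by omega
        exact le_trans (Nat.sub_le _ _) (Nat.pow_le_pow_right (by norm_num) this)

lemma Ssum_split (k : ℕ) (hk : 1 ≤ k) :
    Ssum k ≤ 2 ^ (2 ^ (Nat.log 2 k - 1) + 1)
      + min (2 ^ (k - Nat.log 2 k)) (2 ^ 2 ^ Nat.log 2 k)
      + 2 ^ (k - Nat.log 2 k) := by
  set M := Nat.log 2 k with hM
  have hMk : M ≤ k := Nat.log_le_self 2 k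
  have hsum : Ssum k = (∑ i ∈ range M, min (2 ^ (k - i)) (2 ^ (2 ^ i)))
      + ∑ i ∈ Finset.Ico M (k + 1), min (2 ^ (k - i)) (2 ^ (2 ^ i)) := by
    rw [Ssum, Finset.range_eq_Ico]
    rw [Finset.range_eq_Ico]; exact (Finset.sum_Ico_consecutive (fun i => min (2 ^ (k - i)) (2 ^ (2 ^ i))) (Nat.zero_le M) (show M ≤ k + 1 by omega)).symm
  have h2 : ∑ i ∈ Finset.Ico M (k + 1), min (2 ^ (k - i)) (2 ^ (2 ^ i))
      = min (2 ^ (k - M)) (2 ^ (2 ^ M))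
        + ∑ i ∈ Finset.Ico (M + 1) (k + 1), min (2 ^ (k - i)) (2 ^ (2 ^ i)) := by
    rw [Finset.sum_eq_sum_Ico_succ_bot (by omega)]
  have h3 : ∑ i ∈ Finset.Ico (M + 1) (k + 1), min (2 ^ (k - i)) (2 ^ (2 ^ i)) ≤ 2 ^ (k - M) :=
    le_trans (Finset.sum_le_sum fun i _ => min_le_left _ _) (tail_sum M k)
  have h1 : ∑ i ∈ range M, min (2 ^ (k - i)) (2 ^ (2 ^ i)) ≤ 2 ^ (2 ^ (M - 1) + 1) :=
    le_trans (Finset.sum_le_sum fun i _ => min_le_right _ _) (doubling M)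
  omega

lemma key_nat (k : ℕ) (hk : 2 ≤ k) :
    k * Ssum k ≤ (4 * (k / 2) + 2) * 2 ^ (k - k / 2) + 2 * 2 ^ k
      + (4 * Nat.log 2 k + 4) * 2 ^ (k - Nat.log 2 k) := by
  set M := Nat.log 2 k with hM
  have hM1 : 2 ^ M ≤ k := Nat.pow_log_le_self 2 (by omega)
  have hM2 : k < 2 ^ (M + 1) := Nat.lt_pow_succ_log_self (by norm_num) k
  have hMk : M ≤ k := Nat.log_le_self 2 k
  have hMpos : 1 ≤ M := (Nat.le_log_iff_pow_le (by norm_num) (by omega)).2 (by simpa using hk)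
  have hsplit := Ssum_split k (by omega)
  rw [← hM] at hsplit
  -- T1 bound : k * 2^(2^(M-1)+1) ≤ (4*(k/2)+2) * 2^(k - k/2)
  have hT1 : k * 2 ^ (2 ^ (M - 1) + 1) ≤ (4 * (k / 2) + 2) * 2 ^ (k - k / 2) := by
    have e1 : 2 ^ M = 2 * 2 ^ (M - 1) := by rw [← pow_succ']; congr 1; omega
    have e2 : 2 ^ (M - 1) ≤ k / 2 := Nat.le_div_iff_mul_le (by norm_num) |>.2 (by omega)
    have e3 : 2 ^ (2 ^ (M - 1) + 1) ≤ 2 * 2 ^ (k / 2) := by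
      rw [pow_succ]
      have := Nat.pow_le_pow_right (show 1 ≤ 2 by norm_num) e2
      omega
    calc k * 2 ^ (2 ^ (M - 1) + 1) ≤ k * (2 * 2 ^ (k / 2)) := Nat.mul_le_mul_left _ e3
      _ = (2 * k) * 2 ^ (k / 2) := by ring
      _ ≤ (4 * (k / 2) + 2) * 2 ^ (k - k / 2) :=
          Nat.mul_le_mul (by omega) (Nat.pow_le_pow_right (by norm_num) (by omega))
  -- T3 bound : k * 2^(k-M) ≤ 2 * 2^k
  have hT3 : k * 2 ^ (k - M) ≤ 2 * 2 ^ k := by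
    calc k * 2 ^ (k - M) ≤ 2 ^ (M + 1) * 2 ^ (k - M) := Nat.mul_le_mul_right _ (by omega)
      _ = 2 ^ (M + 1 + (k - M)) := (pow_add 2 _ _).symm
      _ = 2 * 2 ^ k := by rw [show M + 1 + (k - M) = k + 1 by omega, pow_succ]; ring
  -- T2 + T3 combined
  have hT23 : k * (min (2 ^ (k - M)) (2 ^ 2 ^ M) + 2 ^ (k - M))
      ≤ 2 * 2 ^ k + (4 * M + 4) * 2 ^ (k - M) := by
    by_cases hc : 2 ^ M + 2 * M + 2 ≤ k
    · have e1 : 2 ^ 2 ^ M ≤ 2 ^ (k - 2 * M - 2) :=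
        Nat.pow_le_pow_right (by norm_num) (by omega)
      have e2 : k * 2 ^ 2 ^ M ≤ 2 ^ (k - M - 1) := by
        calc k * 2 ^ 2 ^ M ≤ 2 ^ (M + 1) * 2 ^ (k - 2 * M - 2) :=
              Nat.mul_le_mul (by omega) e1
          _ = 2 ^ (M + 1 + (k - 2 * M - 2)) := (pow_add 2 _ _).symm
          _ = 2 ^ (k - M - 1) := by congr 1; omega
      have e3 : k * min (2 ^ (k - M)) (2 ^ 2 ^ M) ≤ 2 ^ (k - M - 1) :=
        le_trans (Nat.mul_le_mul_left _ (min_le_right _ _)) e2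
      have e4 : 2 ^ (k - M - 1) ≤ (4 * M + 4) * 2 ^ (k - M) := by
        have : (2:ℕ) ^ (k - M - 1) ≤ 2 ^ (k - M) := Nat.pow_le_pow_right (by norm_num) (by omega)
        nlinarith [Nat.pow_pos (n := k - M) (show 0 < 2 by norm_num)]
      have := Nat.mul_le_mul_left k (show min (2 ^ (k - M)) (2 ^ 2 ^ M) + 2 ^ (k-M)
          ≤ min (2 ^ (k - M)) (2 ^ 2 ^ M) + 2 ^ (k-M) from le_rfl)
      calc k * (min (2 ^ (k - M)) (2 ^ 2 ^ M) + 2 ^ (k - M))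
          = k * min (2 ^ (k - M)) (2 ^ 2 ^ M) + k * 2 ^ (k - M) := by ring
        _ ≤ 2 ^ (k - M - 1) + 2 * 2 ^ k := by omega
        _ ≤ 2 * 2 ^ k + (4 * M + 4) * 2 ^ (k - M) := by omega
    · have e1 : min (2 ^ (k - M)) (2 ^ 2 ^ M) ≤ 2 ^ (k - M) := min_le_left _ _
      have e5 : 2 ^ M * 2 ^ (k - M) = 2 ^ k := by
        rw [← pow_add]; congr 1; omega
      calc k * (min (2 ^ (k - M)) (2 ^ 2 ^ M) + 2 ^ (k - M))
          ≤ k * (2 * 2 ^ (k - M)) := Nat.mul_le_mul_left _ (by omega)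
        _ = (2 * k) * 2 ^ (k - M) := by ring
        _ ≤ (2 * 2 ^ M + (4 * M + 4)) * 2 ^ (k - M) := Nat.mul_le_mul_right _ (by omega)
        _ = 2 * (2 ^ M * 2 ^ (k - M)) + (4 * M + 4) * 2 ^ (k - M) := by ring
        _ = 2 * 2 ^ k + (4 * M + 4) * 2 ^ (k - M) := by rw [e5]
  calc k * Ssum k
      ≤ k * (2 ^ (2 ^ (M - 1) + 1)
        + (min (2 ^ (k - M)) (2 ^ 2 ^ M) + 2 ^ (k - M))) := by
        apply Nat.mul_le_mul_left; omega
    _ = k * 2 ^ (2 ^ (M - 1) + 1) + k * (min (2 ^ (k - M)) (2 ^ 2 ^ M) + 2 ^ (k - M)) := by ring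
    _ ≤ (4 * (k / 2) + 2) * 2 ^ (k - k / 2) + 2 * 2 ^ k + (4 * M + 4) * 2 ^ (k - M) := by omega

noncomputable def eps (k : ℕ) : ℝ := max 0 ((k * Ssum k : ℝ) / 2 ^ k - 2)

lemma eps_bound (k : ℕ) (hk : 2 ≤ k) :
    eps k ≤ (4 * ((k / 2 : ℕ) : ℝ) + 2) * (1/2) ^ (k / 2 : ℕ)
      + (4 * ((Nat.log 2 k : ℕ) : ℝ) + 4) * (1/2) ^ (Nat.log 2 k) := by
  have h2k : (0:ℝ) < 2 ^ k := by positivity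
  have hkeyR : ((k : ℝ) * Ssum k) ≤ (4 * ((k / 2 : ℕ) : ℝ) + 2) * 2 ^ (k - k / 2)
      + 2 * 2 ^ k + (4 * ((Nat.log 2 k : ℕ) : ℝ) + 4) * 2 ^ (k - Nat.log 2 k) := by
    have := key_nat k hk
    have h := (Nat.cast_le (α := ℝ)).2 this
    push_cast at h
    convert h using 2 <;> push_cast <;> ring
  have e1 : ((1:ℝ)/2) ^ (k/2) * 2 ^ k = 2 ^ (k - k/2) := by
    have h : (2:ℝ) ^ (k - k/2) = 2 ^ k / 2 ^ (k/2) :=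
      pow_sub₀ (2:ℝ) (by norm_num) (Nat.div_le_self _ _)
    rw [h, one_div, inv_pow, div_eq_mul_inv, mul_comm]
  have e2 : ((1:ℝ)/2) ^ (Nat.log 2 k) * 2 ^ k = 2 ^ (k - Nat.log 2 k) := by
    have h : (2:ℝ) ^ (k - Nat.log 2 k) = 2 ^ k / 2 ^ (Nat.log 2 k) :=
      pow_sub₀ (2:ℝ) (by norm_num) (Nat.log_le_self _ _)
    rw [h, one_div, inv_pow, div_eq_mul_inv, mul_comm]
  apply max_le
  · positivity
  · rw [sub_le_iff_le_add, div_le_iff₀ h2k]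
    calc (k : ℝ) * Ssum k ≤ (4 * ((k / 2 : ℕ) : ℝ) + 2) * 2 ^ (k - k / 2)
        + 2 * 2 ^ k + (4 * ((Nat.log 2 k : ℕ) : ℝ) + 4) * 2 ^ (k - Nat.log 2 k) := hkeyR
      _ = ((4 * ((k / 2 : ℕ) : ℝ) + 2) * (1/2) ^ (k / 2 : ℕ)
        + (4 * ((Nat.log 2 k : ℕ) : ℝ) + 4) * (1/2) ^ (Nat.log 2 k) + 2) * 2 ^ k := by
          rw [← e1, ← e2]; ring

lemma tendsto_lin_mul_pow (c d : ℝ) :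
    Filter.Tendsto (fun m : ℕ => (c * m + d) * (1/2 : ℝ) ^ m) Filter.atTop (nhds 0) := by
  have h1 := tendsto_self_mul_const_pow_of_lt_one (r := (1/2 : ℝ)) (by norm_num) (by norm_num)
  have h2 := tendsto_pow_atTop_nhds_zero_of_lt_one (r := (1/2 : ℝ)) (by norm_num) (by norm_num)
  have h3 := (h1.const_mul c).add (h2.const_mul d)
  simp only [mul_zero, add_zero] at h3
  convert h3 using 2 with m
  ring

lemma eps_tendsto : Filter.Tendsto eps Filter.atTop (nhds 0) := by
  have hdiv : Filter.Tendsto (fun k : ℕ => k / 2) Filter.atTop Filter.atTop :=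
    Filter.tendsto_atTop_atTop.2 (fun b => ⟨2*b, fun k hk => by omega⟩)
  have hlog : Filter.Tendsto (fun k : ℕ => Nat.log 2 k) Filter.atTop Filter.atTop :=
    Filter.tendsto_atTop_atTop.2 (fun b => ⟨2^b, fun k hk => by
      have h1 : 1 ≤ 2^b := Nat.one_le_two_pow
      exact (Nat.le_log_iff_pow_le (by norm_num) (by omega)).2 hk⟩)
  have hδ : Filter.Tendsto (fun k : ℕ => (4 * ((k / 2 : ℕ) : ℝ) + 2) * (1/2) ^ (k / 2 : ℕ)
      + (4 * ((Nat.log 2 k : ℕ) : ℝ) + 4) * (1/2) ^ (Nat.log 2 k)) Filter.atTop (nhds 0) := by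
    have := ((tendsto_lin_mul_pow 4 2).comp hdiv).add ((tendsto_lin_mul_pow 4 4).comp hlog)
    simpa using this
  apply tendsto_of_tendsto_of_tendsto_of_le_of_le' tendsto_const_nhds hδ
  · exact Filter.Eventually.of_forall (fun k => le_max_left _ _)
  · exact Filter.eventually_atTop.2 ⟨2, fun k hk => eps_bound k hk⟩

theorem card_vertices_le :
    ∃ ε : ℕ → ℝ, Filter.Tendsto ε Filter.atTop (nhds 0) ∧
      ∀ (V : Type) (_ : Fintype V) (_ : DecidableEq V) (G : BDD V)
        (φ : V → List Bool), IsPhi G φ → Function.Injective φ →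
        (∀ v, φ v ∈ dyadicSet G.k (φ G.root)) ∧
        Fintype.card V ≤ (dyadicSet G.k (φ G.root)).card ∧
        (dyadicSet G.k (φ G.root)).card
          ≤ ∑ i ∈ Finset.range (G.k + 1), min (2 ^ (G.k - i)) (2 ^ (2 ^ i)) ∧
        ((Fintype.card V : ℝ) ≤ (2 : ℝ) ^ G.k * (2 + ε G.k) / (G.k : ℝ)) := by
  classical
  refine ⟨eps, eps_tendsto, ?_⟩
  intro V _ _ G φ hφ hinj
  have hx : (φ G.root).length = 2 ^ G.k := by
    rw [phi_length G φ hφ, G.root_level]; norm_num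
  have hmem : ∀ v, φ v ∈ dyadicSet G.k (φ G.root) := phi_mem G φ hφ
  have hcard : Fintype.card V ≤ (dyadicSet G.k (φ G.root)).card := by
    rw [← Finset.card_univ]
    exact Finset.card_le_card_of_injOn φ (fun v _ => hmem v) hinj.injOn
  have hS : (dyadicSet G.k (φ G.root)).card ≤ Ssum G.k := dyadic_card_le G.k _ hx
  refine ⟨hmem, hcard, hS, ?_⟩
  have hk0 : (0:ℝ) < G.k := by exact_mod_cast G.k_pos
  have h2k : (0:ℝ) < 2 ^ G.k := by positivity
  have hεe : (G.k : ℝ) * Ssum G.k / 2 ^ G.k - 2 ≤ eps G.k := le_max_right _ _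
  have h1 : (G.k : ℝ) * Ssum G.k ≤ (2 + eps G.k) * 2 ^ G.k := by
    have h2 : (G.k : ℝ) * Ssum G.k / 2 ^ G.k ≤ 2 + eps G.k := by linarith
    calc (G.k : ℝ) * Ssum G.k = ((G.k : ℝ) * Ssum G.k / 2 ^ G.k) * 2 ^ G.k := by
          field_simp
      _ ≤ (2 + eps G.k) * 2 ^ G.k := by
          exact mul_le_mul_of_nonneg_right h2 (le_of_lt h2k)
  have hcV : (Fintype.card V : ℝ) ≤ (Ssum G.k : ℝ) := by
    exact_mod_cast le_trans hcard hS
  calc (Fintype.card V : ℝ) ≤ (Ssum G.k : ℝ) := hcV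
    _ ≤ 2 ^ G.k * (2 + eps G.k) / G.k := by
        rw [le_div_iff₀ hk0]; nlinarith [h1]
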